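/- arXiv:2411.03263 — 3 statements merged into one kernel-verified Lean document; each statement's English description precedes it below -/
import Mathlib

section
/- Let f : [a,b] → ℝ be twice differentiable with 0 ≤ m ≤ f''(x) ≤ M for all x ∈ [a,b]. Then for any probability measure P on [a,b], there exists μ ∈ [m, M] such that E_{x∼P}[f(x)] − f(E_{x∼P}[x]) = (1/2) · μ · Var_{x∼P}[x]. -/
open MeasureTheory Real

private lemma holder_aux_convex (a b c : ℝ) (f : ℝ → ℝ)
    (hf1 : ∀ x ∈ Set.Icc a b, DifferentiableAt ℝ f x)
    (hf2 : ∀ x ∈ Set.Icc a b, DifferentiableAt ℝ (deriv f) x)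
    (hc : ∀ x ∈ Set.Icc a b, c ≤ deriv (deriv f) x) :
    ConvexOn ℝ (Set.Icc a b) (fun x => f x - c / 2 * x ^ 2) := by
  have hcf : ContinuousOn f (Set.Icc a b) := fun x hx =>
    (hf1 x hx).continuousAt.continuousWithinAt
  have hq : ∀ x : ℝ, HasDerivAt (fun y : ℝ => c / 2 * y ^ 2) (c * x) x := by
    intro x
    have := (hasDerivAt_pow 2 x).const_mul (c / 2)
    simpa using this.congr_deriv (by ring)
  have hderiv : ∀ x ∈ Set.Icc a b,
      deriv (fun y => f y - c / 2 * y ^ 2) x = deriv f x - c * x := by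
    intro x hx
    exact (((hf1 x hx).hasDerivAt).sub (hq x)).deriv
  refine convexOn_of_deriv2_nonneg (convex_Icc a b)
    (hcf.sub (by fun_prop)) ?_ ?_ ?_
  · rw [interior_Icc]
    intro x hx
    exact ((hf1 x (Set.Ioo_subset_Icc_self hx)).sub
      (hq x).differentiableAt).differentiableWithinAt
  · rw [interior_Icc]
    have : DifferentiableOn ℝ (fun x => deriv f x - c * x) (Set.Ioo a b) := by
      intro x hx
      exact ((hf2 x (Set.Ioo_subset_Icc_self hx)).sub (by fun_prop)).differentiableWithinAt
    exact this.congr fun x hx => hderiv x (Set.Ioo_subset_Icc_self hx)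
  · rw [interior_Icc]
    intro x hx
    have hEq : deriv (fun y => f y - c / 2 * y ^ 2) =ᶠ[nhds x] fun y => deriv f y - c * y :=
      Filter.eventuallyEq_of_mem (Ioo_mem_nhds hx.1 hx.2)
        (fun y hy => hderiv y (Set.Ioo_subset_Icc_self hy))
    have h2 : deriv (fun y => deriv f y - c * y) x = deriv (deriv f) x - c := by
      have hmul : HasDerivAt (fun y : ℝ => c * y) c x := by
        simpa using (hasDerivAt_id x).const_mul c
      exact (((hf2 x (Set.Ioo_subset_Icc_self hx)).hasDerivAt).sub hmul).deriv
    have h3 : deriv (deriv (fun y => f y - c / 2 * y ^ 2)) x = deriv (deriv f) x - c := by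
      rw [hEq.deriv_eq, h2]
    simp only [Function.iterate_succ, Function.iterate_zero, Function.comp_apply, id_eq]
    rw [h3]
    have := hc x (Set.Ioo_subset_Icc_self hx)
    linarith

private lemma holder_aux_jensen (a b c : ℝ) (f : ℝ → ℝ)
    (P : Measure ℝ) [IsProbabilityMeasure P]
    (hae : ∀ᵐ x ∂P, x ∈ Set.Icc a b)
    (hcf : ContinuousOn f (Set.Icc a b))
    (hIntf : Integrable f P)
    (hIntid : Integrable (fun x : ℝ => x) P)
    (hIntsq : Integrable (fun x : ℝ => x ^ 2) P)
    (hconv : ConvexOn ℝ (Set.Icc a b) (fun x => f x - c / 2 * x ^ 2)) :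
    f (∫ x, x ∂P) - c / 2 * (∫ x, x ∂P) ^ 2
      ≤ (∫ x, f x ∂P) - c / 2 * ∫ x, x ^ 2 ∂P := by
  have hInt : Integrable (fun x => f x - c / 2 * x ^ 2) P :=
    hIntf.sub (hIntsq.const_mul _)
  have h := hconv.map_integral_le (f := fun x : ℝ => x)
    (hcf.sub (by fun_prop)) isClosed_Icc hae hIntid (by exact hInt)
  rw [integral_sub hIntf (hIntsq.const_mul _), integral_const_mul] at h
  exact h

/-- Hölder's defect formula: for a twice differentiable function `f` on `[a,b]` with
`0 ≤ m ≤ f'' ≤ M` there, and any probability measure `P` supported on `[a,b]`, there is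
`μ ∈ [m,M]` with `E[f] - f(E[x]) = (1/2)·μ·Var[x]`. -/
theorem holder_defect (a b m M : ℝ) (hab : a ≤ b) (f : ℝ → ℝ)
    (hf1 : ∀ x ∈ Set.Icc a b, DifferentiableAt ℝ f x)
    (hf2 : ∀ x ∈ Set.Icc a b, DifferentiableAt ℝ (deriv f) x)
    (hm0 : 0 ≤ m)
    (hmM : ∀ x ∈ Set.Icc a b, m ≤ deriv (deriv f) x ∧ deriv (deriv f) x ≤ M)
    (P : Measure ℝ) [IsProbabilityMeasure P] (hsupp : P (Set.Icc a b)ᶜ = 0) :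
    ∃ μ ∈ Set.Icc m M,
      (∫ x, f x ∂P) - f (∫ x, x ∂P)
        = (1 / 2) * μ * ∫ x, (x - ∫ y, y ∂P) ^ 2 ∂P := by
  have hae : ∀ᵐ x ∂P, x ∈ Set.Icc a b := by
    rw [MeasureTheory.ae_iff]
    exact hsupp
  have hcf : ContinuousOn f (Set.Icc a b) := fun x hx =>
    (hf1 x hx).continuousAt.continuousWithinAt
  -- a continuous global representative of f
  set F : ℝ → ℝ := fun x => f (min b (max a x)) with hF
  have hFcont : Continuous F := by
    apply hcf.comp_continuous
      (continuous_const.min (continuous_const.max continuous_id))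
    intro x
    exact ⟨le_min hab (le_max_left a x), min_le_left _ _⟩
  have hfF : f =ᵐ[P] F := by
    filter_upwards [hae] with x hx
    rw [hF]
    simp only [max_eq_right hx.1, min_eq_right hx.2]
  have hmeasf : AEStronglyMeasurable f P :=
    hFcont.aestronglyMeasurable.congr hfF.symm
  obtain ⟨C, hC⟩ := isCompact_Icc.exists_bound_of_continuousOn hcf
  -- integrability
  have hIntf : Integrable f P := by
    refine (integrable_const C).mono' hmeasf ?_
    filter_upwards [hae] with x hx
    exact hC x hx
  set K := max |a| |b| with hK
  have hKb : ∀ x ∈ Set.Icc a b, |x| ≤ K := fun x hx => abs_le_max_abs_abs hx.1 hx.2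
  have hIntid : Integrable (fun x : ℝ => x) P := by
    refine (integrable_const K).mono' (continuous_id.aestronglyMeasurable) ?_
    filter_upwards [hae] with x hx
    exact hKb x hx
  have hIntsq : Integrable (fun x : ℝ => x ^ 2) P := by
    refine (integrable_const (K ^ 2)).mono' (by fun_prop) ?_
    filter_upwards [hae] with x hx
    have := hKb x hx
    rw [Real.norm_eq_abs, abs_pow]
    have h0 : (0:ℝ) ≤ |x| := abs_nonneg x
    nlinarith
  set e := ∫ x, x ∂P with he
  -- lower Jensen bound
  have hlowc := holder_aux_jensen a b m f P hae hcf hIntf hIntid hIntsq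
    (holder_aux_convex a b m f hf1 hf2 (fun x hx => (hmM x hx).1))
  -- upper Jensen bound via -f
  have hupc : (∫ x, f x ∂P) - M / 2 * ∫ x, x ^ 2 ∂P ≤ f e - M / 2 * e ^ 2 := by
    have hf1' : ∀ x ∈ Set.Icc a b, DifferentiableAt ℝ (fun y => -f y) x :=
      fun x hx => (hf1 x hx).neg
    have hd1 : deriv (fun y => -f y) = fun y => -(deriv f y) := funext fun y => deriv.neg
    have hf2' : ∀ x ∈ Set.Icc a b, DifferentiableAt ℝ (deriv (fun y => -f y)) x := by
      intro x hx
      rw [hd1]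
      exact (hf2 x hx).neg
    have hc' : ∀ x ∈ Set.Icc a b, -M ≤ deriv (deriv (fun y => -f y)) x := by
      intro x hx
      have h2 : deriv (deriv (fun y => -f y)) x = -(deriv (deriv f) x) := by
        rw [hd1]; exact deriv.neg
      rw [h2]
      linarith [(hmM x hx).2]
    have h := holder_aux_jensen a b (-M) (fun y => -f y) P hae hcf.neg hIntf.neg hIntid hIntsq
      (holder_aux_convex a b (-M) (fun y => -f y) hf1' hf2' hc')
    rw [integral_neg] at h
    rw [← he] at h
    linarith
  rw [← he] at hlowc
  -- variance identity
  set V := ∫ x, (x - e) ^ 2 ∂P with hV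
  have hVnn : 0 ≤ V := integral_nonneg fun x => sq_nonneg _
  have hVeq : V = (∫ x, x ^ 2 ∂P) - e ^ 2 := by
    have h1 : (fun x : ℝ => (x - e) ^ 2) = fun x => x ^ 2 - 2 * e * x + e ^ 2 := by
      funext x; ring
    have h3 : Integrable (fun x : ℝ => x ^ 2 - 2 * e * x) P :=
      hIntsq.sub (hIntid.const_mul (2 * e))
    rw [hV, h1, integral_add h3 (integrable_const _),
      integral_sub hIntsq (hIntid.const_mul (2 * e)), integral_const_mul, integral_const]
    simp [measure_univ, ← he]
    ring
  set D := (∫ x, f x ∂P) - f e with hD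
  have hlow : m / 2 * V ≤ D := by rw [hVeq, hD]; linarith
  have hup : D ≤ M / 2 * V := by rw [hVeq, hD]; linarith
  have hmleM : m ≤ M := by
    have h := hmM a ⟨le_refl a, hab⟩
    linarith [h.1, h.2]
  by_cases hV0 : V = 0
  · refine ⟨m, ⟨le_refl m, hmleM⟩, ?_⟩
    rw [hV0] at hlow hup
    show D = 1 / 2 * m * V
    rw [hV0]
    simp only [mul_zero] at hlow hup ⊢
    linarith
  · have hVpos : 0 < V := lt_of_le_of_ne hVnn (Ne.symm hV0)
    refine ⟨2 * D / V, ⟨?_, ?_⟩, ?_⟩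
    · rw [le_div_iff₀ hVpos]; linarith
    · rw [div_le_iff₀ hVpos]; linarith
    · show D = 1 / 2 * (2 * D / V) * V
      field_simp
end

section
/- Let f : [a,b] → ℝ with 0 < a < b be the function f(x) = log x. For any probability measure P on [a,b], the Jensen gap satisfies log(E_{x∼P}[x]) − E_{x∼P}[log x] ≤ (1/(2a²)) · Var_{x∼P}[x] and log(E_{x∼P}[x]) − E_{x∼P}[log x] ≥ (1/(2b²)) · Var_{x∼P}[x]. -/
open MeasureTheory Real

lemma jg_hasDeriv (c μ t : ℝ) (ht : t ≠ 0) (hc : c ≠ 0) (hμ : μ ≠ 0) :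
    HasDerivAt (fun t => (t - μ)^2/(2*c^2) + Real.log t - (t - μ)/μ)
      ((t - μ)*(t*μ - c^2)/(c^2*(t*μ))) t := by
  have h1 : HasDerivAt (fun t : ℝ => (t - μ)^2/(2*c^2)) ((t-μ)/c^2) t := by
    have := (((hasDerivAt_id t).sub_const μ).pow 2).div_const (2*c^2)
    refine this.congr_deriv ?_
    simp only [id]
    ring
  have h2 : HasDerivAt Real.log (1/t) t := by
    simpa [one_div] using Real.hasDerivAt_log ht
  have h3 : HasDerivAt (fun t : ℝ => (t - μ)/μ) (1/μ) t := by
    have := ((hasDerivAt_id t).sub_const μ).div_const μ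
    simpa [one_div] using this
  have h := (h1.add h2).sub h3
  refine h.congr_deriv ?_
  field_simp
  ring

lemma jg_cont (c μ x y : ℝ) (hx : 0 < x) (hxy : x ≤ y) :
    ContinuousOn (fun t => (t - μ)^2/(2*c^2) + Real.log t - (t - μ)/μ) (Set.Icc x y) := by
  apply ContinuousOn.sub (ContinuousOn.add (by fun_prop) ?_) (by fun_prop)
  exact Real.continuousOn_log.mono (fun t htm => ne_of_gt (lt_of_lt_of_le hx htm.1))

lemma jg_upper (c μ x : ℝ) (hc : 0 < c) (hμ : c ≤ μ) (hx : c ≤ x) :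
    Real.log μ - Real.log x + (x - μ)/μ ≤ (x - μ)^2 / (2*c^2) := by
  set F : ℝ → ℝ := fun t => (t - μ)^2/(2*c^2) + Real.log t - (t - μ)/μ with hF
  have hμ0 : (0:ℝ) < μ := lt_of_lt_of_le hc hμ
  have key : F μ ≤ F x := by
    rcases le_total μ x with h | h
    · have : MonotoneOn F (Set.Icc μ x) := by
        apply monotoneOn_of_deriv_nonneg (convex_Icc μ x) (jg_cont c μ μ x hμ0 h)
        · intro t htm
          rw [interior_Icc] at htm
          exact ((jg_hasDeriv c μ t (ne_of_gt (lt_of_lt_of_le hμ0 htm.1.le)) (ne_of_gt hc) (ne_of_gt hμ0)).differentiableAt).differentiableWithinAt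
        · intro t htm
          rw [interior_Icc] at htm
          have ht0 : 0 < t := lt_of_lt_of_le hμ0 htm.1.le
          rw [(jg_hasDeriv c μ t (ne_of_gt ht0) (ne_of_gt hc) (ne_of_gt hμ0)).deriv]
          apply div_nonneg _ (by positivity)
          apply mul_nonneg (by linarith [htm.1])
          nlinarith [htm.1]
      exact this (Set.left_mem_Icc.2 h) (Set.right_mem_Icc.2 h) h
    · have hx0 : 0 < x := lt_of_lt_of_le hc hx
      have : AntitoneOn F (Set.Icc x μ) := by
        apply antitoneOn_of_deriv_nonpos (convex_Icc x μ) (jg_cont c μ x μ hx0 h)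
        · intro t htm
          rw [interior_Icc] at htm
          exact ((jg_hasDeriv c μ t (ne_of_gt (lt_of_lt_of_le hx0 htm.1.le)) (ne_of_gt hc) (ne_of_gt hμ0)).differentiableAt).differentiableWithinAt
        · intro t htm
          rw [interior_Icc] at htm
          have ht0 : 0 < t := lt_of_lt_of_le hx0 htm.1.le
          have htc : c ≤ t := le_trans hx htm.1.le
          rw [(jg_hasDeriv c μ t (ne_of_gt ht0) (ne_of_gt hc) (ne_of_gt hμ0)).deriv]
          apply div_nonpos_of_nonpos_of_nonneg _ (by positivity)
          apply mul_nonpos_of_nonpos_of_nonneg (by linarith [htm.2])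
          nlinarith
      exact this (Set.left_mem_Icc.2 h) (Set.right_mem_Icc.2 h) h
  have hFμ : F μ = Real.log μ := by simp [hF]
  have hFx : F x = (x - μ)^2/(2*c^2) + Real.log x - (x - μ)/μ := rfl
  rw [hFμ, hFx] at key
  linarith

lemma jg_lower (c μ x : ℝ) (hμ0 : 0 < μ) (hx0 : 0 < x) (hμ : μ ≤ c) (hx : x ≤ c) :
    (x - μ)^2 / (2*c^2) ≤ Real.log μ - Real.log x + (x - μ)/μ := by
  set F : ℝ → ℝ := fun t => (t - μ)^2/(2*c^2) + Real.log t - (t - μ)/μ with hF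
  have hc : 0 < c := lt_of_lt_of_le hμ0 hμ
  have key : F x ≤ F μ := by
    rcases le_total μ x with h | h
    · have : AntitoneOn F (Set.Icc μ x) := by
        apply antitoneOn_of_deriv_nonpos (convex_Icc μ x) (jg_cont c μ μ x hμ0 h)
        · intro t htm
          rw [interior_Icc] at htm
          exact ((jg_hasDeriv c μ t (ne_of_gt (lt_of_lt_of_le hμ0 htm.1.le)) (ne_of_gt hc) (ne_of_gt hμ0)).differentiableAt).differentiableWithinAt
        · intro t htm
          rw [interior_Icc] at htm
          have ht0 : 0 < t := lt_of_lt_of_le hμ0 htm.1.le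
          have htc : t ≤ c := le_trans htm.2.le hx
          rw [(jg_hasDeriv c μ t (ne_of_gt ht0) (ne_of_gt hc) (ne_of_gt hμ0)).deriv]
          apply div_nonpos_of_nonpos_of_nonneg _ (by positivity)
          apply mul_nonpos_of_nonneg_of_nonpos (by linarith [htm.1])
          nlinarith
      exact this (Set.left_mem_Icc.2 h) (Set.right_mem_Icc.2 h) h
    · have : MonotoneOn F (Set.Icc x μ) := by
        apply monotoneOn_of_deriv_nonneg (convex_Icc x μ) (jg_cont c μ x μ hx0 h)
        · intro t htm
          rw [interior_Icc] at htm
          exact ((jg_hasDeriv c μ t (ne_of_gt (lt_of_lt_of_le hx0 htm.1.le)) (ne_of_gt hc) (ne_of_gt hμ0)).differentiableAt).differentiableWithinAt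
        · intro t htm
          rw [interior_Icc] at htm
          have ht0 : 0 < t := lt_of_lt_of_le hx0 htm.1.le
          have htc : t ≤ c := le_trans htm.2.le hμ
          rw [(jg_hasDeriv c μ t (ne_of_gt ht0) (ne_of_gt hc) (ne_of_gt hμ0)).deriv]
          apply div_nonneg _ (by positivity)
          have h1 : t - μ ≤ 0 := by linarith [htm.2]
          have h2 : t*μ - c^2 ≤ 0 := by nlinarith
          nlinarith [mul_nonneg (neg_nonneg.2 h1) (neg_nonneg.2 h2)]
      exact this (Set.left_mem_Icc.2 h) (Set.right_mem_Icc.2 h) h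
  have hFμ : F μ = Real.log μ := by simp [hF]
  have hFx : F x = (x - μ)^2/(2*c^2) + Real.log x - (x - μ)/μ := rfl
  rw [hFμ, hFx] at key
  linarith
/-- Two-sided Jensen-gap bound for `log` on `[a,b]` with `0 < a < b`:
`Var/(2b²) ≤ log(E[x]) − E[log x] ≤ Var/(2a²)`. -/
theorem jensen_gap_log_two_sided (a b : ℝ) (ha : 0 < a) (hab : a < b)
    (P : Measure ℝ) [IsProbabilityMeasure P] (hsupp : P (Set.Icc a b)ᶜ = 0) :
    Real.log (∫ x, x ∂P) - (∫ x, Real.log x ∂P)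
        ≤ (1 / (2 * a ^ 2)) * ∫ x, (x - ∫ y, y ∂P) ^ 2 ∂P
    ∧ Real.log (∫ x, x ∂P) - (∫ x, Real.log x ∂P)
        ≥ (1 / (2 * b ^ 2)) * ∫ x, (x - ∫ y, y ∂P) ^ 2 ∂P := by
  have hae : ∀ᵐ x ∂P, x ∈ Set.Icc a b := by
    rw [MeasureTheory.ae_iff]
    exact hsupp
  -- integrability
  have hid : Integrable (fun x : ℝ => x) P := by
    apply (integrable_const b).mono' aestronglyMeasurable_id
    filter_upwards [hae] with x hx
    simp only [id_eq, Real.norm_eq_abs, abs_le]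
    exact ⟨by linarith [hx.1], hx.2⟩
  have hlog : Integrable (fun x : ℝ => Real.log x) P := by
    apply (integrable_const (max |Real.log a| |Real.log b|)).mono'
      Real.measurable_log.aestronglyMeasurable
    filter_upwards [hae] with x hx
    rw [Real.norm_eq_abs]
    rcases abs_cases (Real.log x) with ⟨h, _⟩ | ⟨h, _⟩ <;> rw [h]
    · exact le_trans (Real.log_le_log (lt_of_lt_of_le ha hx.1) hx.2)
        (le_max_of_le_right (le_abs_self _))
    · refine le_trans ?_ (le_max_of_le_left (neg_le_abs _))
      have := Real.log_le_log ha hx.1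
      linarith
  obtain ⟨m, hm⟩ : ∃ m : ℝ, m = ∫ x, x ∂P := ⟨_, rfl⟩
  rw [← hm]
  have hma : a ≤ m := by
    rw [hm]
    calc a = ∫ _, a ∂P := by simp
    _ ≤ ∫ x, x ∂P := by
        apply integral_mono_ae (integrable_const a) hid
        filter_upwards [hae] with x hx using hx.1
  have hmb : m ≤ b := by
    rw [hm]
    calc ∫ x, x ∂P ≤ ∫ _, b ∂P := by
          apply integral_mono_ae hid (integrable_const b)
          filter_upwards [hae] with x hx using hx.2
    _ = b := by simp
  have hm0 : 0 < m := lt_of_lt_of_le ha hma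
  have hsq : Integrable (fun x : ℝ => (x - m)^2) P := by
    apply (integrable_const ((b-a)^2)).mono'
      ((measurable_id.sub_const m).pow_const 2).aestronglyMeasurable
    filter_upwards [hae] with x hx
    simp only [id_eq, Real.norm_eq_abs, abs_le]
    constructor
    · nlinarith [sq_nonneg (x - m), sq_nonneg (b - a)]
    · nlinarith [hx.1, hx.2]
  have hlin : Integrable (fun x : ℝ => (x - m)/m) P := ((hid.sub (integrable_const m)).div_const m)
  have hG : Integrable (fun x : ℝ => Real.log m - Real.log x + (x - m)/m) P :=
    ((integrable_const (Real.log m)).sub hlog).add hlin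
  have hGint : ∫ x, (Real.log m - Real.log x + (x - m)/m) ∂P
      = Real.log m - ∫ x, Real.log x ∂P := by
    have hc_log : Integrable (fun x : ℝ => Real.log m - Real.log x) P :=
      (integrable_const _).sub hlog
    rw [integral_add hc_log hlin, integral_sub (integrable_const _) hlog, integral_div,
        integral_sub hid (integrable_const _)]
    simp [← hm]
  constructor
  · have step : ∫ x, (Real.log m - Real.log x + (x - m)/m) ∂P
        ≤ ∫ x, (x - m)^2/(2*a^2) ∂P := by
      apply integral_mono_ae hG (hsq.div_const _)
      filter_upwards [hae] with x hx
      exact jg_upper a m x ha hma hx.1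
    rw [hGint] at step
    have hrw : (1 / (2 * a ^ 2)) * ∫ x, (x - m)^2 ∂P = ∫ x, (x - m)^2/(2*a^2) ∂P := by
      rw [integral_div]; ring
    rw [hrw]
    exact step
  · have step : ∫ x, (x - m)^2/(2*b^2) ∂P
        ≤ ∫ x, (Real.log m - Real.log x + (x - m)/m) ∂P := by
      apply integral_mono_ae (hsq.div_const _) hG
      filter_upwards [hae] with x hx
      exact jg_lower b m x hm0 (lt_of_lt_of_le ha hx.1) hmb hx.2
    rw [hGint] at step
    have hrw : (1 / (2 * b ^ 2)) * ∫ x, (x - m)^2 ∂P = ∫ x, (x - m)^2/(2*b^2) ∂P := by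
      rw [integral_div]; ring
    rw [ge_iff_le, hrw]
    exact step
end

section
/- Let P be a probability measure on data space, and for parameters (θ, ψ) let L(d, θ, ψ) ∈ [a, b] with 0 < a ≤ b be a bounded likelihood. Then for any probability measure P_Ψ over ψ and any fixed d, the Jensen gap log(E_{ψ∼P_Ψ}[L(d,θ,ψ)]) − E_{ψ∼P_Ψ}[log L(d,θ,ψ)] lies in the interval [Var_{ψ}[L(d,θ,ψ)]/(2b²), Var_{ψ}[L(d,θ,ψ)]/(2a²)]. -/
open MeasureTheory

/-- Generic "minimum at `m`" lemma: a function on `[a,b]` whose derivative has the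
sign of `x - m` attains its minimum at `m`. -/
lemma jg_min {a b m : ℝ} (ham : a ≤ m) (hmb : m ≤ b)
    (u u' : ℝ → ℝ)
    (hd : ∀ x ∈ Set.Icc a b, HasDerivAt u (u' x) x)
    (hsign : ∀ x ∈ Set.Icc a b, 0 ≤ (x - m) * u' x) :
    ∀ x ∈ Set.Icc a b, u m ≤ u x := by
  intro x hx
  have hmI : m ∈ Set.Icc a b := ⟨ham, hmb⟩
  rcases le_total x m with hxm | hmx
  · -- antitone on [a, m]
    have hA : AntitoneOn u (Set.Icc a m) := by
      apply antitoneOn_of_hasDerivWithinAt_nonpos (convex_Icc a m) (f' := u')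
      · intro y hy
        exact ((hd y ⟨hy.1, hy.2.trans hmb⟩).continuousAt).continuousWithinAt
      · intro y hy
        rw [interior_Icc] at hy
        exact ((hd y ⟨hy.1.le, hy.2.le.trans hmb⟩)).hasDerivWithinAt
      · intro y hy
        rw [interior_Icc] at hy
        have h := hsign y ⟨hy.1.le, hy.2.le.trans hmb⟩
        nlinarith [hy.2]
    exact hA ⟨hx.1, hxm⟩ ⟨ham, le_refl m⟩ hxm
  · -- monotone on [m, b]
    have hM : MonotoneOn u (Set.Icc m b) := by
      apply monotoneOn_of_hasDerivWithinAt_nonneg (convex_Icc m b) (f' := u')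
      · intro y hy
        exact ((hd y ⟨ham.trans hy.1, hy.2⟩).continuousAt).continuousWithinAt
      · intro y hy
        rw [interior_Icc] at hy
        exact ((hd y ⟨ham.trans hy.1.le, hy.2.le⟩)).hasDerivWithinAt
      · intro y hy
        rw [interior_Icc] at hy
        have h := hsign y ⟨ham.trans hy.1.le, hy.2.le⟩
        nlinarith [hy.1]
    exact hM ⟨le_refl m, hmb⟩ ⟨hmx, hx.2⟩ hmx

/-- Derivative of `y ↦ (y-m)²/(2c²) - (y-m)/m + log y`. -/
lemma jg_hasDerivAt (c m : ℝ) (hc : c ≠ 0) (hm : m ≠ 0) {x : ℝ} (hx : x ≠ 0) :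
    HasDerivAt (fun y => (y - m) ^ 2 / (2 * c ^ 2) - (y - m) / m + Real.log y)
      ((x - m) / c ^ 2 - (x - m) / (m * x)) x := by
  have h1 : HasDerivAt (fun y => (y - m) ^ 2 / (2 * c ^ 2))
      ((2 * (x - m) ^ 1 * 1) / (2 * c ^ 2)) x :=
    (((hasDerivAt_id x).sub_const m).pow 2).div_const (2 * c ^ 2)
  have h2 : HasDerivAt (fun y => (y - m) / m) (1 / m) x := by
    simpa using ((hasDerivAt_id x).sub_const m).div_const m
  have h3 : HasDerivAt Real.log x⁻¹ x := Real.hasDerivAt_log hx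
  have := (h1.sub h2).add h3
  refine this.congr_deriv ?_
  field_simp
  ring

/-- Pointwise two-sided bound on the logarithmic Bregman-type remainder. -/
lemma jg_pointwise {a b m x : ℝ} (ha : 0 < a) (ham : a ≤ m) (hmb : m ≤ b)
    (hx : x ∈ Set.Icc a b) :
    (x - m) ^ 2 / (2 * b ^ 2) ≤ (x - m) / m - (Real.log x - Real.log m) ∧
      (x - m) / m - (Real.log x - Real.log m) ≤ (x - m) ^ 2 / (2 * a ^ 2) := by
  have hm : 0 < m := ha.trans_le ham
  have hb : 0 < b := hm.trans_le hmb
  constructor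
  · -- lower bound: u y = (y-m)/m - log y - (y-m)²/(2b²) is minimized at m
    have key := jg_min ham hmb
      (fun y => -((y - m) ^ 2 / (2 * b ^ 2) - (y - m) / m + Real.log y))
      (fun y => -((y - m) / b ^ 2 - (y - m) / (m * y)))
      (fun y hy => (jg_hasDerivAt b m hb.ne' hm.ne' (ha.trans_le hy.1).ne').neg)
      (fun y hy => by
        have hy0 : 0 < y := ha.trans_le hy.1
        have hyb : m * y ≤ b ^ 2 := by nlinarith [hy.2]
        have h1 : (0:ℝ) < m * y := by positivity
        have h2 : (y - m) / b ^ 2 * (y - m) ≤ (y - m) / (m * y) * (y - m) := by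
          rw [div_mul_eq_mul_div, div_mul_eq_mul_div]
          gcongr
          exact mul_self_nonneg _
        nlinarith)
      x hx
    have e1 : (m - m) ^ 2 / (2 * b ^ 2) = 0 := by simp
    have e2 : (m - m) / m = 0 := by simp
    linarith [key]
  · -- upper bound: u y = (y-m)²/(2a²) - (y-m)/m + log y is minimized at m
    have key := jg_min ham hmb
      (fun y => (y - m) ^ 2 / (2 * a ^ 2) - (y - m) / m + Real.log y)
      (fun y => (y - m) / a ^ 2 - (y - m) / (m * y))
      (fun y hy => jg_hasDerivAt a m ha.ne' hm.ne' (ha.trans_le hy.1).ne')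
      (fun y hy => by
        have hy0 : 0 < y := ha.trans_le hy.1
        have hya : a ^ 2 ≤ m * y := by nlinarith [hy.1]
        have h1 : (0:ℝ) < m * y := by positivity
        have h2 : (y - m) / (m * y) * (y - m) ≤ (y - m) / a ^ 2 * (y - m) := by
          rw [div_mul_eq_mul_div, div_mul_eq_mul_div]
          gcongr
          exact mul_self_nonneg _
        nlinarith)
      x hx
    have e1 : (m - m) ^ 2 / (2 * a ^ 2) = 0 := by simp
    have e2 : (m - m) / m = 0 := by simp
    linarith [key]

/-- Two-sided Jensen-gap bound for the marginalization over task parameters of a bounded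
likelihood: if `L(d,θ,ψ) ∈ [a,b]` with `0 < a`, then for fixed `d, θ` the Jensen gap
`log E_ψ[L] − E_ψ[log L]` lies in `[Var_ψ[L]/(2b²), Var_ψ[L]/(2a²)]`. -/
theorem jensen_gap_likelihood_marginalization
    {D T S : Type*} [MeasurableSpace S]
    (PPsi : Measure S) [IsProbabilityMeasure PPsi]
    (L : D → T → S → ℝ) (a b : ℝ) (ha : 0 < a) (hab : a ≤ b)
    (d : D) (θ : T)
    (hL : ∀ ψ, L d θ ψ ∈ Set.Icc a b) :
    Real.log (∫ ψ, L d θ ψ ∂PPsi) - (∫ ψ, Real.log (L d θ ψ) ∂PPsi)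
      ∈ Set.Icc
          ((∫ ψ, (L d θ ψ - ∫ ψ', L d θ ψ' ∂PPsi) ^ 2 ∂PPsi) / (2 * b ^ 2))
          ((∫ ψ, (L d θ ψ - ∫ ψ', L d θ ψ' ∂PPsi) ^ 2 ∂PPsi) / (2 * a ^ 2)) := by
  set X : S → ℝ := fun ψ => L d θ ψ with hX
  have hXpos : ∀ ψ, 0 < X ψ := fun ψ => ha.trans_le (hL ψ).1
  by_cases hInt : Integrable X PPsi
  · -- measurable / integrable case
    set m : ℝ := ∫ ψ, X ψ ∂PPsi with hm
    have hma : a ≤ m := by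
      have := integral_mono (integrable_const a) hInt (fun ψ => (hL ψ).1)
      simpa using this
    have hmb : m ≤ b := by
      have := integral_mono hInt (integrable_const b) (fun ψ => (hL ψ).2)
      simpa using this
    have hm0 : 0 < m := ha.trans_le hma
    -- integrability of log X and (X - m)²
    have hmeas : AEStronglyMeasurable X PPsi := hInt.aestronglyMeasurable
    have hlogInt : Integrable (fun ψ => Real.log (X ψ)) PPsi := by
      refine Integrable.mono' (integrable_const (|Real.log a| + |Real.log b|))
        ((Real.measurable_log.comp_aemeasurable hmeas.aemeasurable).aestronglyMeasurable) ?_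
      refine Filter.Eventually.of_forall fun ψ => ?_
      have hla : Real.log a ≤ Real.log (X ψ) := Real.log_le_log ha (hL ψ).1
      have hlb : Real.log (X ψ) ≤ Real.log b := Real.log_le_log (hXpos ψ) (hL ψ).2
      rw [Real.norm_eq_abs, abs_le]
      have h1 := abs_nonneg (Real.log a)
      have h2 := abs_nonneg (Real.log b)
      have h3 := neg_abs_le (Real.log a)
      have h4 := le_abs_self (Real.log b)
      constructor <;> linarith
    have hsqInt : Integrable (fun ψ => (X ψ - m) ^ 2) PPsi := by
      refine Integrable.mono' (integrable_const ((b - a) ^ 2))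
        (((hmeas.sub aestronglyMeasurable_const).pow 2)) ?_
      refine Filter.Eventually.of_forall fun ψ => ?_
      rw [Real.norm_eq_abs, abs_of_nonneg (sq_nonneg _)]
      have h1 : |X ψ - m| ≤ b - a := by
        rw [abs_le]; constructor <;> [linarith [(hL ψ).1, hmb]; linarith [(hL ψ).2, hma]]
      calc (X ψ - m) ^ 2 = |X ψ - m| ^ 2 := (sq_abs _).symm
        _ ≤ (b - a) ^ 2 := by apply pow_le_pow_left₀ (abs_nonneg _) h1 2
    -- the middle integrand
    have hInt1 : Integrable (fun ψ => (X ψ - m) / m) PPsi :=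
      (hInt.sub (integrable_const m)).div_const m
    have hInt2 : Integrable (fun ψ => Real.log (X ψ) - Real.log m) PPsi :=
      hlogInt.sub (integrable_const (Real.log m))
    have hmidInt : Integrable (fun ψ => (X ψ - m) / m - (Real.log (X ψ) - Real.log m)) PPsi :=
      hInt1.sub hInt2
    -- middle integral equals log m - ∫ log X
    have hmid : (∫ ψ, ((X ψ - m) / m - (Real.log (X ψ) - Real.log m)) ∂PPsi)
        = Real.log m - ∫ ψ, Real.log (X ψ) ∂PPsi := by
      rw [integral_sub hInt1 hInt2,
        integral_div, integral_sub hInt (integrable_const m),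
        integral_sub hlogInt (integrable_const (Real.log m))]
      simp
      rw [← hm]
      ring
    -- pointwise bounds
    have hlow : ∀ ψ, (X ψ - m) ^ 2 / (2 * b ^ 2)
        ≤ (X ψ - m) / m - (Real.log (X ψ) - Real.log m) :=
      fun ψ => (jg_pointwise ha hma hmb (hL ψ)).1
    have hhigh : ∀ ψ, (X ψ - m) / m - (Real.log (X ψ) - Real.log m)
        ≤ (X ψ - m) ^ 2 / (2 * a ^ 2) :=
      fun ψ => (jg_pointwise ha hma hmb (hL ψ)).2
    constructor
    · have h := integral_mono (hsqInt.div_const (2 * b ^ 2)) hmidInt hlow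
      rw [integral_div] at h
      rw [hmid] at h
      exact h
    · have h := integral_mono hmidInt (hsqInt.div_const (2 * a ^ 2)) hhigh
      rw [integral_div] at h
      rw [hmid] at h
      exact h
  · -- non-integrable (non-measurable) case: everything is zero
    have h1 : (∫ ψ, X ψ ∂PPsi) = 0 := integral_undef hInt
    have h2 : ¬ Integrable (fun ψ => Real.log (X ψ)) PPsi := by
      intro h
      apply hInt
      have hXm : AEStronglyMeasurable X PPsi := by
        have := Real.continuous_exp.comp_aestronglyMeasurable h.aestronglyMeasurable
        refine this.congr (Filter.Eventually.of_forall fun ψ => ?_)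
        simp [Real.exp_log (hXpos ψ)]
      refine Integrable.mono' (integrable_const b) hXm
        (Filter.Eventually.of_forall fun ψ => ?_)
      rw [Real.norm_eq_abs, abs_of_pos (hXpos ψ)]; exact (hL ψ).2
    have h3 : ¬ Integrable (fun ψ => (X ψ - (∫ ψ', X ψ' ∂PPsi)) ^ 2) PPsi := by
      rw [h1]
      simp only [sub_zero]
      intro h
      apply hInt
      have hXm : AEStronglyMeasurable X PPsi := by
        have := Real.continuous_sqrt.comp_aestronglyMeasurable h.aestronglyMeasurable
        refine this.congr (Filter.Eventually.of_forall fun ψ => ?_)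
        simp [Real.sqrt_sq (hXpos ψ).le]
      refine Integrable.mono' (integrable_const b) hXm
        (Filter.Eventually.of_forall fun ψ => ?_)
      rw [Real.norm_eq_abs, abs_of_pos (hXpos ψ)]; exact (hL ψ).2
    rw [show (∫ ψ, Real.log (L d θ ψ) ∂PPsi) = 0 from integral_undef h2,
      show (∫ ψ, (L d θ ψ - ∫ ψ', L d θ ψ' ∂PPsi) ^ 2 ∂PPsi) = 0 from integral_undef h3]
    rw [hX] at h1  -- no-op; keep names aligned
    rw [h1]
    simp
end
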